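/- arXiv:2108.06374 — 4 statements merged into one kernel-verified Lean document; each statement's English description precedes it below -/
import Mathlib

section
/- Let σ > 0 and let ρ : [0,∞) → ℝ be continuously differentiable with ρ(0) = 1. Suppose that for every h ≥ 0 the function t ↦ σ²·ρ(t)·ρ(t+h) + ∫₀ᵗ ρ(u)ρ(u+h) du is constant on [0,∞). Then ρ(t) = exp(−t/(2σ²)) for all t ≥ 0; equivalently, ρ(t) = e^{−θt} with θ = 1/(2σ²), so that σ² = 1/(2θ). -/
open MeasureTheory Set

/-- Necessity direction of Theorem 2.2 (at the covariance level): if the covariance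
`σ²·ρ(t)·ρ(t+h) + ∫₀ᵗ ρ(u)ρ(u+h) du` does not depend on `t` (for every `h ≥ 0`),
then the memory kernel is `ρ t = exp (-t/(2σ²))`. -/
theorem stmt_1 (σ : ℝ) (hσ : 0 < σ) (ρ : ℝ → ℝ)
    (hreg : ContDiffOn ℝ 1 ρ (Set.Ici 0)) (hρ0 : ρ 0 = 1)
    (hconst : ∀ h : ℝ, 0 ≤ h → ∀ t₁ t₂ : ℝ, 0 ≤ t₁ → 0 ≤ t₂ →
      σ ^ 2 * ρ t₁ * ρ (t₁ + h) + (∫ u in (0:ℝ)..t₁, ρ u * ρ (u + h)) =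
        σ ^ 2 * ρ t₂ * ρ (t₂ + h) + (∫ u in (0:ℝ)..t₂, ρ u * ρ (u + h))) :
    ∀ t : ℝ, 0 ≤ t → ρ t = Real.exp (-t / (2 * σ ^ 2)) := by
  have hσ2 : (0:ℝ) < σ ^ 2 := by positivity
  set φ : ℝ → ℝ := fun u => ρ u * ρ u with hφ
  have hρcont : ContinuousOn ρ (Ici 0) := hreg.continuousOn
  have hφcont : ContinuousOn φ (Ici 0) := hρcont.mul hρcont
  -- Step 1: the h = 0 identity
  have key : ∀ t : ℝ, 0 ≤ t →
      σ ^ 2 * ρ t * ρ t + (∫ u in (0:ℝ)..t, φ u) = σ ^ 2 := by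
    intro t ht
    have := hconst 0 le_rfl t 0 ht le_rfl
    simp only [add_zero, intervalIntegral.integral_same, hρ0, mul_one] at this
    simpa [hφ] using this
  -- Step 2: FTC — the integral has derivative φ t within Ici 0
  have hFTC : ∀ t : ℝ, 0 ≤ t →
      HasDerivWithinAt (fun u => ∫ x in (0:ℝ)..u, φ x) (φ t) (Ici 0) t := by
    intro t ht
    have hint : IntervalIntegrable φ volume 0 t :=
      (hφcont.mono (by rw [uIcc_of_le ht]; exact Icc_subset_Ici_self)).intervalIntegrable
    have haem : AEStronglyMeasurable φ (volume.restrict (Ici (0:ℝ))) :=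
      hφcont.aestronglyMeasurable measurableSet_Ici
    rcases eq_or_lt_of_le ht with h0 | h0
    · subst h0
      refine intervalIntegral.integral_hasDerivWithinAt_right hint
        (⟨Ici 0, ?_, haem⟩ : StronglyMeasurableAtFilter φ (nhdsWithin 0 (Ioi 0)) volume) ?_
      · exact Filter.mem_of_superset self_mem_nhdsWithin Ioi_subset_Ici_self
      · exact (hφcont 0 self_mem_Ici).mono Ioi_subset_Ici_self
    · have hmem : Ici (0:ℝ) ∈ nhds t := Ici_mem_nhds h0
      have hca : ContinuousAt φ t := (hφcont t ht).continuousAt hmem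
      exact (intervalIntegral.integral_hasDerivAt_right hint
        (⟨Ici 0, hmem, haem⟩ : StronglyMeasurableAtFilter φ (nhds t) volume)
        hca).hasDerivWithinAt
  -- Step 3: derivative of ρ within Ici 0
  set ρ' : ℝ → ℝ := fun t => derivWithin ρ (Ici 0) t with hρ'
  have hdiff : ∀ t : ℝ, 0 ≤ t → HasDerivWithinAt ρ (ρ' t) (Ici 0) t := by
    intro t ht
    exact ((hreg.differentiableOn one_ne_zero) t ht).hasDerivWithinAt
  -- Step 4: ODE  φ t + 2 σ² ρ t ρ' t = 0 on Ici 0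
  have hODE : ∀ t : ℝ, 0 ≤ t → φ t + 2 * σ ^ 2 * ρ t * ρ' t = 0 := by
    intro t ht
    have h1 : HasDerivWithinAt (fun u => σ ^ 2 * ρ u * ρ u)
        (σ ^ 2 * (ρ' t * ρ t + ρ t * ρ' t)) (Ici 0) t := by
      have := ((hdiff t ht).mul (hdiff t ht)).const_mul (σ ^ 2)
      exact this.congr (fun u _ => mul_assoc _ _ _) (mul_assoc _ _ _)
    have h2 : HasDerivWithinAt (fun u => σ ^ 2 * ρ u * ρ u + ∫ x in (0:ℝ)..u, φ x)
        (σ ^ 2 * (ρ' t * ρ t + ρ t * ρ' t) + φ t) (Ici 0) t := h1.add (hFTC t ht)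
    have h3 : HasDerivWithinAt (fun _ : ℝ => σ ^ 2)
        (σ ^ 2 * (ρ' t * ρ t + ρ t * ρ' t) + φ t) (Ici 0) t := by
      apply h2.congr (fun u hu => (key u hu).symm) (key t ht).symm
    have h4 : σ ^ 2 * (ρ' t * ρ t + ρ t * ρ' t) + φ t = 0 := by
      have := h3.derivWithin (uniqueDiffOn_Ici 0 t ht)
      rw [derivWithin_fun_const] at this
      exact this.symm
    nlinarith [h4]
  -- Step 5: ψ t = φ t * exp (t/σ²) is constant
  have hψ : ∀ t : ℝ, 0 ≤ t → φ t * Real.exp (t / σ ^ 2) = 1 := by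
    have hconst' : ∀ t ∈ Ici (0:ℝ),
        (fun u => φ u * Real.exp (u / σ ^ 2)) t
          = (fun u => φ u * Real.exp (u / σ ^ 2)) 0 := by
      have hder : ∀ t ∈ Ici (0:ℝ),
          HasDerivWithinAt (fun u => φ u * Real.exp (u / σ ^ 2)) 0 (Ici 0) t := by
        intro t ht
        have hexp : HasDerivWithinAt (fun u : ℝ => Real.exp (u / σ ^ 2))
            (Real.exp (t / σ ^ 2) * (1 / σ ^ 2)) (Ici 0) t := by
          have hdiv : HasDerivWithinAt (fun u : ℝ => u / σ ^ 2) (1 / σ ^ 2) (Ici 0) t := by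
            simpa using (hasDerivWithinAt_id t (Ici 0)).div_const (σ ^ 2)
          simpa using hdiv.exp
        have hφd : HasDerivWithinAt φ (ρ' t * ρ t + ρ t * ρ' t) (Ici 0) t :=
          (hdiff t ht).mul (hdiff t ht)
        have := hφd.mul hexp
        refine (this.congr (fun u _ => rfl) rfl).congr_deriv ?_
        have h0 := hODE t ht
        rw [show φ t * (Real.exp (t / σ ^ 2) * (1 / σ ^ 2))
            = Real.exp (t / σ ^ 2) * (φ t / σ ^ 2) by ring,
          show φ t / σ ^ 2 = -(2 * ρ t * ρ' t) by rw [div_eq_iff hσ2.ne']; linarith]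
        ring
      intro t ht
      refine (convex_Ici (0:ℝ)).is_const_of_fderivWithin_eq_zero
        (fun u hu => ((hder u hu).differentiableWithinAt)) ?_ ht self_mem_Ici
      intro u hu
      have := (hder u hu).hasFDerivWithinAt.fderivWithin (uniqueDiffOn_Ici 0 u hu)
      rw [this]
      ext
      simp
    intro t ht
    have := hconst' t ht
    simp only [hφ, hρ0, zero_div, Real.exp_zero, mul_one, one_mul] at this
    simpa [hφ] using this
  -- Step 6: φ t = exp (-t/σ²)
  have hsq : ∀ t : ℝ, 0 ≤ t → ρ t ^ 2 = Real.exp (-t / σ ^ 2) := by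
    intro t ht
    have h := hψ t ht
    have he : Real.exp (t / σ ^ 2) ≠ 0 := (Real.exp_pos _).ne'
    have : φ t = Real.exp (-t / σ ^ 2) := by
      rw [neg_div, Real.exp_neg]
      field_simp at h ⊢
      linarith [h]
    simpa [hφ, sq] using this
  -- Step 7: positivity of ρ on Ici 0 via IVT
  have hpos : ∀ t : ℝ, 0 ≤ t → 0 < ρ t := by
    intro t ht
    by_contra hneg
    push_neg at hneg
    have hne : ρ t ≠ 0 := by
      intro h0
      have := hsq t ht
      rw [h0] at this
      simpa using (Real.exp_pos (-t / σ ^ 2)).ne (by linarith [this])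
    have hlt : ρ t < 0 := lt_of_le_of_ne hneg hne
    have : (0:ℝ) ∈ ρ '' Icc 0 t := by
      apply intermediate_value_Icc' ht (hρcont.mono (Icc_subset_Ici_self))
      constructor <;> [linarith; linarith [hρ0]]
    obtain ⟨x, hx, hx0⟩ := this
    have := hsq x hx.1
    rw [hx0] at this
    simpa using (Real.exp_pos (-x / σ ^ 2)).ne (by linarith [this])
  -- Step 8: conclude
  intro t ht
  have h1 : ρ t ^ 2 = Real.exp (-t / (2 * σ ^ 2)) ^ 2 := by
    rw [← Real.exp_nat_mul]
    rw [hsq t ht]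
    norm_num
    ring_nf
  exact (sq_eq_sq₀ (hpos t ht).le (Real.exp_pos _).le).mp h1
end

section
/- Let σ > 0 and let ρ : [0,∞) → ℝ be continuous with ρ(0) = 1 and ρ(t) ≠ 0 for all t ≥ 0. Define γ(t, t+h) = σ²·ρ(t)·ρ(t+h) + ∫₀ᵗ ρ(u)ρ(u+h) du for t, h ≥ 0. If γ(0, t+h)·γ(t, t) = γ(0, t)·γ(t, t+h) for all t, h ≥ 0, then ρ satisfies the exponential Cauchy equation ρ(t+h) = ρ(t)ρ(h) for all t, h ≥ 0, and consequently there exists c ∈ ℝ such that ρ(t) = e^{ct} for all t ≥ 0. -/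
open MeasureTheory Set Filter intervalIntegral

/-- A continuous function on `[0,∞)` with `ρ 0 = 1`, nonvanishing, satisfying the
multiplicative Cauchy equation, is an exponential. -/
lemma aux_cauchy_to_exp (ρ : ℝ → ℝ)
    (hcont : ContinuousOn ρ (Set.Ici 0)) (hρ0 : ρ 0 = 1)
    (hne : ∀ t : ℝ, 0 ≤ t → ρ t ≠ 0)
    (hC : ∀ t : ℝ, 0 ≤ t → ∀ h : ℝ, 0 ≤ h → ρ (t + h) = ρ t * ρ h) :
    ∃ c : ℝ, ∀ t : ℝ, 0 ≤ t → ρ t = Real.exp (c * t) := by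
  have hpos : ∀ t : ℝ, 0 ≤ t → 0 < ρ t := by
    intro t ht
    have h2 : ρ t = ρ (t / 2) * ρ (t / 2) := by
      have := hC (t / 2) (by linarith) (t / 2) (by linarith)
      rw [add_halves] at this
      exact this
    have := mul_self_nonneg (ρ (t / 2))
    rcases lt_or_eq_of_le (h2 ▸ this) with h | h
    · exact h
    · exact absurd h.symm (hne t ht)
  set g : ℝ → ℝ := fun t => Real.log (ρ t) with hg
  have gadd : ∀ a : ℝ, 0 ≤ a → ∀ b : ℝ, 0 ≤ b → g (a + b) = g a + g b := by
    intro a ha b hb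
    simp only [hg, hC a ha b hb]
    exact Real.log_mul (hne a ha) (hne b hb)
  have g0 : g 0 = 0 := by simp [hg, hρ0]
  have gnat : ∀ n : ℕ, ∀ t : ℝ, 0 ≤ t → g ((n : ℝ) * t) = (n : ℝ) * g t := by
    intro n
    induction n with
    | zero => intro t ht; simp [g0]
    | succ n ih =>
      intro t ht
      have h1 : ((n : ℝ) + 1) * t = (n : ℝ) * t + t := by ring
      push_cast
      rw [h1, gadd _ (by positivity) _ ht, ih t ht]
      ring
  have grat : ∀ q : ℚ, 0 ≤ q → g (q : ℝ) = (q : ℝ) * g 1 := by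
    intro q hq
    have hq' : (0 : ℝ) ≤ (q : ℝ) := by exact_mod_cast hq
    have hden : ((q.den : ℝ)) ≠ 0 := by positivity
    have hnum : (0 : ℤ) ≤ q.num := Rat.num_nonneg.mpr hq
    have h1 : ((q.den : ℝ)) * (q : ℝ) = (q.num : ℝ) := by
      rw [mul_comm]
      rw_mod_cast [Rat.mul_den_eq_num]
    have h2 : g ((q.den : ℝ) * (q : ℝ)) = (q.den : ℝ) * g (q : ℝ) := gnat q.den _ hq'
    have h3 : (q.num : ℝ) = ((q.num.toNat : ℕ) : ℝ) := by
      exact_mod_cast (Int.toNat_of_nonneg hnum).symm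
    have h4 : g ((q.num : ℝ)) = (q.num : ℝ) * g 1 := by
      rw [h3]
      have := gnat q.num.toNat 1 zero_le_one
      simpa using this
    have h5 : (q.den : ℝ) * g (q : ℝ) = (q.num : ℝ) * g 1 := by
      rw [← h2, h1, h4]
    have h6 : g (q : ℝ) = ((q.num : ℝ) / (q.den : ℝ)) * g 1 := by
      field_simp at h5 ⊢
      linarith [h5]
    rw [h6, Rat.cast_def]
  have gcont : ContinuousOn g (Set.Ici 0) := hcont.log hne
  have glin : ∀ t : ℝ, 0 ≤ t → g t = g 1 * t := by
    intro t ht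
    -- choose rationals qₙ with t < qₙ < t + 1/(n+1)
    have hex : ∀ n : ℕ, ∃ q : ℚ, t < (q : ℝ) ∧ (q : ℝ) < t + 1 / ((n : ℝ) + 1) := by
      intro n
      have : t < t + 1 / ((n : ℝ) + 1) := by
        have : (0 : ℝ) < 1 / ((n : ℝ) + 1) := by positivity
        linarith
      exact exists_rat_btwn this
    choose q hq1 hq2 using hex
    have hqt : Filter.Tendsto (fun n => ((q n : ℝ))) atTop (nhds t) := by
      have hupper : Filter.Tendsto (fun n : ℕ => t + 1 / ((n : ℝ) + 1)) atTop (nhds t) := by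
        have := tendsto_one_div_add_atTop_nhds_zero_nat (𝕜 := ℝ)
        have h2 := this.const_add t
        simpa using h2
      exact tendsto_of_tendsto_of_tendsto_of_le_of_le tendsto_const_nhds hupper
        (fun n => (hq1 n).le) (fun n => (hq2 n).le)
    have hq0 : ∀ n, (0 : ℚ) ≤ q n := by
      intro n
      have : (0 : ℝ) ≤ (q n : ℝ) := le_of_lt (lt_of_le_of_lt ht (hq1 n))
      exact_mod_cast this
    have hmem : ∀ n, ((q n : ℝ)) ∈ Set.Ici (0 : ℝ) := fun n =>
      le_of_lt (lt_of_le_of_lt ht (hq1 n))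
    have hT1 : Filter.Tendsto (fun n => g ((q n : ℝ))) atTop (nhds (g t)) := by
      have hcw : ContinuousWithinAt g (Set.Ici 0) t := gcont t ht
      exact hcw.tendsto.comp (tendsto_nhdsWithin_of_tendsto_nhds_of_eventually_within _
        hqt (Filter.Eventually.of_forall hmem))
    have hT2 : Filter.Tendsto (fun n => g ((q n : ℝ))) atTop (nhds (t * g 1)) := by
      have heq : ∀ n, g ((q n : ℝ)) = (q n : ℝ) * g 1 := fun n => grat (q n) (hq0 n)
      simp only [heq]
      exact hqt.mul_const (g 1)
    have := tendsto_nhds_unique hT1 hT2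
    rw [this]; ring
  refine ⟨g 1, fun t ht => ?_⟩
  have := glin t ht
  rw [← this, hg]
  exact (Real.exp_log (hpos t ht)).symm

/-- Necessity direction of Theorem 2.3 (at the covariance level): if the covariance
`γ(t,t+h) = σ²ρ(t)ρ(t+h) + ∫₀ᵗ ρ(u)ρ(u+h) du` satisfies the Markov identity
`γ(0,t+h)·γ(t,t) = γ(0,t)·γ(t,t+h)`, then `ρ` satisfies the exponential Cauchy
equation and hence `ρ t = exp (c t)` for some real `c`. -/
theorem stmt_2 (σ : ℝ) (hσ : 0 < σ) (ρ : ℝ → ℝ)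
    (hcont : ContinuousOn ρ (Set.Ici 0)) (hρ0 : ρ 0 = 1)
    (hne : ∀ t : ℝ, 0 ≤ t → ρ t ≠ 0)
    (γ : ℝ → ℝ → ℝ)
    (hγ : ∀ t : ℝ, 0 ≤ t → ∀ h : ℝ, 0 ≤ h →
      γ t (t + h) = σ ^ 2 * ρ t * ρ (t + h) + ∫ u in (0:ℝ)..t, ρ u * ρ (u + h))
    (hmarkov : ∀ t : ℝ, 0 ≤ t → ∀ h : ℝ, 0 ≤ h →
      γ 0 (t + h) * γ t t = γ 0 t * γ t (t + h)) :
    (∀ t : ℝ, 0 ≤ t → ∀ h : ℝ, 0 ≤ h → ρ (t + h) = ρ t * ρ h) ∧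
      ∃ c : ℝ, ∀ t : ℝ, 0 ≤ t → ρ t = Real.exp (c * t) := by
  have hcauchy : ∀ t : ℝ, 0 ≤ t → ∀ h : ℝ, 0 ≤ h → ρ (t + h) = ρ t * ρ h := by
    intro t ht h hh
    rcases ht.eq_or_lt with ht0 | ht0
    · rw [← ht0, zero_add, hρ0, one_mul]
    -- now 0 < t, fix h
    set f1 : ℝ → ℝ := fun u => ρ u * ρ u with hf1
    set f2 : ℝ → ℝ := fun u => ρ u * ρ (u + h) with hf2
    have hρh : ContinuousOn (fun u => ρ (u + h)) (Set.Ici 0) := by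
      apply hcont.comp (Continuous.continuousOn (by continuity))
      intro u hu
      exact add_nonneg hu hh
    have hcont1 : ContinuousOn f1 (Set.Ici 0) := hcont.mul hcont
    have hcont2 : ContinuousOn f2 (Set.Ici 0) := hcont.mul hρh
    set A : ℝ → ℝ := fun s => ∫ u in (0:ℝ)..s, f1 u with hA
    set C : ℝ → ℝ := fun s => ∫ u in (0:ℝ)..s, f2 u with hCdef
    -- key identity from the Markov property
    have key : ∀ s : ℝ, 0 ≤ s → ρ (s + h) * A s = ρ s * C s := by
      intro s hs
      have e1 : γ 0 (s + h) = σ ^ 2 * ρ (s + h) := by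
        have := hγ 0 le_rfl (s + h) (add_nonneg hs hh)
        simpa [hρ0] using this
      have e2 : γ s s = σ ^ 2 * ρ s * ρ s + A s := by
        have := hγ s hs 0 le_rfl
        simpa [hA, hf1] using this
      have e3 : γ 0 s = σ ^ 2 * ρ s := by
        have := hγ 0 le_rfl s hs
        simpa [hρ0] using this
      have e4 : γ s (s + h) = σ ^ 2 * ρ s * ρ (s + h) + C s := hγ s hs h hh
      have hm := hmarkov s hs h hh
      rw [e1, e2, e3, e4] at hm
      have hσ2 : σ ^ 2 ≠ 0 := by positivity
      apply mul_left_cancel₀ hσ2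
      linear_combination hm
    -- A is positive for positive s
    have hInt1 : ∀ s : ℝ, 0 ≤ s → IntervalIntegrable f1 volume 0 s := by
      intro s hs
      apply ContinuousOn.intervalIntegrable
      apply hcont1.mono
      rw [Set.uIcc_of_le hs]
      exact Set.Icc_subset_Ici_self
    have hInt2 : ∀ s : ℝ, 0 ≤ s → IntervalIntegrable f2 volume 0 s := by
      intro s hs
      apply ContinuousOn.intervalIntegrable
      apply hcont2.mono
      rw [Set.uIcc_of_le hs]
      exact Set.Icc_subset_Ici_self
    have hApos : ∀ s : ℝ, 0 < s → 0 < A s := by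
      intro s hs
      apply intervalIntegral_pos_of_pos_on (hInt1 s hs.le) _ hs
      intro x hx
      exact mul_self_pos.mpr (hne x hx.1.le)
    -- derivatives of A and C on (0, ∞)
    have hmeas1 : ∀ s : ℝ, 0 < s → StronglyMeasurableAtFilter f1 (nhds s) volume := by
      intro s hs
      exact ContinuousOn.stronglyMeasurableAtFilter isOpen_Ioi
        (hcont1.mono Set.Ioi_subset_Ici_self) s hs
    have hmeas2 : ∀ s : ℝ, 0 < s → StronglyMeasurableAtFilter f2 (nhds s) volume := by
      intro s hs
      exact ContinuousOn.stronglyMeasurableAtFilter isOpen_Ioi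
        (hcont2.mono Set.Ioi_subset_Ici_self) s hs
    have hca : ∀ s : ℝ, 0 < s → ContinuousAt ρ s := by
      intro s hs
      exact hcont.continuousAt (Ici_mem_nhds hs)
    have hcaf1 : ∀ s : ℝ, 0 < s → ContinuousAt f1 s := fun s hs => (hca s hs).mul (hca s hs)
    have hcaf2 : ∀ s : ℝ, 0 < s → ContinuousAt f2 s := by
      intro s hs
      apply (hca s hs).mul
      have h1 : ContinuousAt ρ (s + h) := hca (s + h) (by linarith)
      have h2 : ContinuousAt (fun x : ℝ => x + h) s := by fun_prop
      have h3 : ContinuousAt (ρ ∘ fun x : ℝ => x + h) s := ContinuousAt.comp h1 h2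
      exact h3
    have hAderiv : ∀ s : ℝ, 0 < s → HasDerivAt A (f1 s) s := by
      intro s hs
      exact integral_hasDerivAt_right (hInt1 s hs.le) (hmeas1 s hs) (hcaf1 s hs)
    have hCderiv : ∀ s : ℝ, 0 < s → HasDerivAt C (f2 s) s := by
      intro s hs
      exact integral_hasDerivAt_right (hInt2 s hs.le) (hmeas2 s hs) (hcaf2 s hs)
    -- φ = C / A has zero derivative on (0, ∞)
    set φ : ℝ → ℝ := fun s => C s / A s with hφ
    have hφderiv : ∀ s : ℝ, 0 < s → HasDerivAt φ 0 s := by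
      intro s hs
      have hd := (hCderiv s hs).div (hAderiv s hs) (hApos s hs).ne'
      have hzero : (f2 s * A s - C s * f1 s) / A s ^ 2 = 0 := by
        rw [div_eq_zero_iff]; left
        have hk := key s hs.le
        simp only [hf2, hf1]
        linear_combination ρ s * hk
      rwa [hzero] at hd
    -- φ is constant on (0, ∞)
    have hφconst : ∀ s : ℝ, 0 < s → s ≤ t → φ t = φ s := by
      intro s hs hst
      have hc : ContinuousOn φ (Set.Icc s t) := by
        intro x hx
        exact ((hφderiv x (lt_of_lt_of_le hs hx.1)).differentiableAt.continuousAt).continuousWithinAt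
      have hd : ∀ x ∈ Set.Ico s t, HasDerivWithinAt φ 0 (Set.Ici x) x := by
        intro x hx
        exact (hφderiv x (lt_of_lt_of_le hs hx.1)).hasDerivWithinAt
      exact constant_of_has_deriv_right_zero hc hd t ⟨hst, le_rfl⟩
    -- on (0, t], φ s = ρ(s+h)/ρ(s)
    have hφval : ∀ s : ℝ, 0 < s → φ s = ρ (s + h) / ρ s := by
      intro s hs
      have hk := key s hs.le
      rw [hφ]
      rw [div_eq_div_iff (hApos s hs).ne' (hne s hs.le)]
      linarith [hk]
    -- limit as s → 0⁺ of ρ(s+h)/ρ(s) is ρ h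
    have hlim : Filter.Tendsto (fun s => ρ (s + h) / ρ s) (nhdsWithin 0 (Set.Ioi 0))
        (nhds (ρ h)) := by
      have h1 : ContinuousWithinAt (fun s => ρ (s + h) / ρ s) (Set.Ici 0) 0 := by
        apply ContinuousWithinAt.div
        · exact hρh 0 Set.self_mem_Ici
        · exact hcont 0 Set.self_mem_Ici
        · rw [hρ0]; exact one_ne_zero
      have h2 := h1.tendsto
      rw [zero_add, hρ0, div_one] at h2
      exact h2.mono_left (nhdsWithin_mono _ Set.Ioi_subset_Ici_self)
    -- φ t is the constant value, equal to ρ h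
    have hev : ∀ᶠ s in nhdsWithin 0 (Set.Ioi 0), ρ (s + h) / ρ s = φ t := by
      filter_upwards [Ioc_mem_nhdsGT_of_mem (Set.mem_Ico.mpr ⟨le_rfl, ht0⟩)] with s hs
      rw [← hφval s hs.1, hφconst s hs.1 hs.2]
    have hlim2 : Filter.Tendsto (fun _ : ℝ => φ t) (nhdsWithin 0 (Set.Ioi 0))
        (nhds (ρ h)) := hlim.congr' hev
    have hφt : φ t = ρ h := tendsto_nhds_unique tendsto_const_nhds hlim2
    -- conclude
    have hv := hφval t ht0
    rw [hφt, eq_div_iff (hne t ht0.le)] at hv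
    linear_combination -hv
  exact ⟨hcauchy, aux_cauchy_to_exp ρ hcont hρ0 hne hcauchy⟩
end

section
/- Let G ≥ 0, β ∈ ℝ, v₀ ∈ ℝ, t > 0, let τ be a finite Borel measure on ℝ with τ({0}) = 0, and let ρ : [0,t] → ℝ be continuous with ρ(s) ≠ 0 for all s ∈ [0,t]. Let D = {x ∈ ℝ : |x| ≤ 1} and define the characteristic exponent ψ(z) = −(1/2)G·z² + iβz + ∫_ℝ (e^{izy} − 1 − izy·1_D(y)) τ(dy) for z ∈ ℝ. Define ν_t on Borel sets B by ν_t(B) = ∫_ℝ ( ∫₀ᵗ 1_B(y·ρ(t−s)) ds ) τ(dy), and set A_t = G·∫₀ᵗ ρ(t−s)² ds and γ_{t,v₀} = ρ(t)·v₀ + β·∫₀ᵗ ρ(t−s) ds + ∫_ℝ ( ∫₀ᵗ y·ρ(t−s)·[1_D(y·ρ(t−s)) − 1_D(y)] ds ) τ(dy). Then for every z ∈ ℝ, iz·ρ(t)·v₀ + ∫₀ᵗ ψ(z·ρ(t−s)) ds = −(1/2)A_t·z² + i·γ_{t,v₀}·z + ∫_ℝ (e^{izx} − 1 − izx·1_D(x))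 ν_t(dx). -/
open MeasureTheory ENNReal

/-- Indicator (as a real-valued function) of the set `D = {x : |x| ≤ 1}`. -/
noncomputable def indD (x : ℝ) : ℝ :=
  Set.indicator {y : ℝ | |y| ≤ 1} (fun _ => (1 : ℝ)) x

/-- The Lévy–Khintchine characteristic exponent
`ψ(z) = −(1/2)Gz² + iβz + ∫ (e^{izy} − 1 − izy·1_D(y)) τ(dy)`. -/
noncomputable def levyExponent (G β : ℝ) (τ : Measure ℝ) (z : ℝ) : ℂ :=
  -(1 / 2 : ℂ) * (G : ℂ) * (z : ℂ) ^ 2 + Complex.I * (β : ℂ) * (z : ℂ) +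
    ∫ y, (Complex.exp (Complex.I * (z : ℂ) * (y : ℂ)) - 1 -
      Complex.I * (z : ℂ) * (y : ℂ) * (indD y : ℂ)) ∂τ

lemma measurable_indD : Measurable indD :=
  measurable_const.indicator ((isClosed_le continuous_abs continuous_const).measurableSet)

lemma abs_mul_indD_le (x : ℝ) : |x * indD x| ≤ 1 := by
  by_cases h : |x| ≤ 1
  · have hx : indD x = 1 := Set.indicator_of_mem (by exact h) _
    simpa [hx] using h
  · have hx : indD x = 0 := Set.indicator_of_notMem (by exact h) _
    simp [hx]

lemma integrable_of_bound {α : Type*} [MeasurableSpace α] {μ : Measure α} [IsFiniteMeasure μ]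
    {E : Type*} [NormedAddCommGroup E] {f : α → E} (hm : AEStronglyMeasurable f μ)
    (C : ℝ) (h : ∀ x, ‖f x‖ ≤ C) : Integrable f μ :=
  (integrable_const C).mono' hm (Filter.Eventually.of_forall h)

/-- The integrand of the Lévy–Khintchine jump integral. -/
noncomputable def kern (w y : ℝ) : ℂ :=
  Complex.exp (Complex.I * (w : ℂ) * (y : ℂ)) - 1 -
    Complex.I * (w : ℂ) * (y : ℂ) * (indD y : ℂ)

lemma measurable_kern : Measurable fun p : ℝ × ℝ => kern p.1 p.2 := by
  have h1 : Measurable fun p : ℝ × ℝ => Complex.I * (p.1 : ℂ) * (p.2 : ℂ) :=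
    (measurable_const.mul (Complex.measurable_ofReal.comp measurable_fst)).mul
      (Complex.measurable_ofReal.comp measurable_snd)
  exact ((Complex.measurable_exp.comp h1).sub measurable_const).sub
    (h1.mul (Complex.measurable_ofReal.comp (measurable_indD.comp measurable_snd)))

lemma measurable_kern' {α : Type*} [MeasurableSpace α] {w v : α → ℝ}
    (hw : Measurable w) (hv : Measurable v) :
    Measurable fun x => kern (w x) (v x) := by
  have h1 : Measurable fun x => Complex.I * (w x : ℂ) * (v x : ℂ) :=
    (measurable_const.mul (Complex.measurable_ofReal.comp hw)).mul
      (Complex.measurable_ofReal.comp hv)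
  simp only [kern]
  exact ((Complex.measurable_exp.comp h1).sub measurable_const).sub
    (h1.mul (Complex.measurable_ofReal.comp (measurable_indD.comp hv)))

lemma integral_complex_ofReal' {α : Type*} [MeasurableSpace α] {μ : Measure α} {f : α → ℝ} :
    ∫ x, (f x : ℂ) ∂μ = ((∫ x, f x ∂μ : ℝ) : ℂ) := integral_ofReal

lemma norm_kern_le (w y : ℝ) : ‖kern w y‖ ≤ 2 + |w| := by
  have h1 : ‖Complex.exp (Complex.I * (w : ℂ) * (y : ℂ))‖ = 1 := by
    have harg : Complex.I * (w : ℂ) * (y : ℂ) = ((w * y : ℝ) : ℂ) * Complex.I := by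
      push_cast; ring
    rw [harg, Complex.norm_exp_ofReal_mul_I]
  have h2 : ‖Complex.I * (w : ℂ) * (y : ℂ) * (indD y : ℂ)‖ ≤ |w| := by
    have harg : Complex.I * (w : ℂ) * (y : ℂ) * (indD y : ℂ)
        = Complex.I * ((w * (y * indD y) : ℝ) : ℂ) := by push_cast; ring
    rw [harg, norm_mul, Complex.norm_I, one_mul, Complex.norm_real, Real.norm_eq_abs, abs_mul]
    calc |w| * |y * indD y| ≤ |w| * 1 :=
          mul_le_mul_of_nonneg_left (abs_mul_indD_le y) (abs_nonneg w)
      _ = |w| := mul_one _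
  have h3 : ‖Complex.exp (Complex.I * (w : ℂ) * (y : ℂ)) - 1‖ ≤ 2 := by
    calc ‖Complex.exp (Complex.I * (w : ℂ) * (y : ℂ)) - 1‖
        ≤ ‖Complex.exp (Complex.I * (w : ℂ) * (y : ℂ))‖ + ‖(1 : ℂ)‖ := norm_sub_le _ _
      _ = 2 := by rw [h1]; norm_num
  calc ‖kern w y‖ ≤ ‖Complex.exp (Complex.I * (w : ℂ) * (y : ℂ)) - 1‖ +
        ‖Complex.I * (w : ℂ) * (y : ℂ) * (indD y : ℂ)‖ := norm_sub_le _ _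
    _ ≤ 2 + |w| := add_le_add h3 h2

set_option maxHeartbeats 2000000 in
/-- Analytic core of Theorem 3.2: the exponent of the characteristic function of
`V(t)` rewrites in Lévy–Khintchine form with triplet `(A_t, γ_{t,v₀}, ν_t)`. -/
theorem stmt_8 (G β v₀ t : ℝ) (hG : 0 ≤ G) (ht : 0 < t)
    (τ : Measure ℝ) [IsFiniteMeasure τ] (hτ0 : τ {0} = 0)
    (ρ : ℝ → ℝ) (hρc : ContinuousOn ρ (Set.Icc 0 t))
    (hρne : ∀ s ∈ Set.Icc (0:ℝ) t, ρ s ≠ 0)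
    (ν : Measure ℝ)
    (hν : ∀ B : Set ℝ, MeasurableSet B →
      ν B = ∫⁻ y, (∫⁻ s in Set.Icc (0:ℝ) t,
        B.indicator (fun _ => (1 : ℝ≥0∞)) (y * ρ (t - s))) ∂τ)
    (A γ : ℝ)
    (hA : A = G * ∫ s in (0:ℝ)..t, ρ (t - s) ^ 2)
    (hγ : γ = ρ t * v₀ + β * (∫ s in (0:ℝ)..t, ρ (t - s)) +
      ∫ y, (∫ s in (0:ℝ)..t,
        y * ρ (t - s) * (indD (y * ρ (t - s)) - indD y)) ∂τ) :
    ∀ z : ℝ,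
      Complex.I * (z : ℂ) * (ρ t : ℂ) * (v₀ : ℂ) +
          (∫ s in (0:ℝ)..t, levyExponent G β τ (z * ρ (t - s))) =
        -(1 / 2 : ℂ) * (A : ℂ) * (z : ℂ) ^ 2 + Complex.I * (γ : ℂ) * (z : ℂ) +
          ∫ x, (Complex.exp (Complex.I * (z : ℂ) * (x : ℂ)) - 1 -
            Complex.I * (z : ℂ) * (x : ℂ) * (indD x : ℂ)) ∂ν := by
  intro z
  have ht0 : (0:ℝ) ≤ t := ht.le
  -- globally continuous modification of ρ
  set ρ' : ℝ → ℝ := fun s => ρ (max 0 (min t s)) with hρ'def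
  have hclamp : ∀ s : ℝ, max 0 (min t s) ∈ Set.Icc 0 t := fun s =>
    ⟨le_max_left _ _, max_le ht0 (min_le_left _ _)⟩
  have hρ'eq : ∀ s ∈ Set.Icc (0:ℝ) t, ρ' s = ρ s := by
    intro s hs
    simp only [hρ'def, min_eq_right hs.2, max_eq_right hs.1]
  have hρ'cont : Continuous ρ' :=
    hρc.comp_continuous (continuous_const.max (continuous_const.min continuous_id)) hclamp
  obtain ⟨C, hC⟩ := isCompact_Icc.exists_bound_of_continuousOn hρc
  have hC' : ∀ s : ℝ, |ρ' s| ≤ C := fun s => by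
    simpa [Real.norm_eq_abs] using hC _ (hclamp s)
  -- the set and measures
  set S : Set ℝ := Set.Icc (0:ℝ) t with hSdef
  have hSm : MeasurableSet S := measurableSet_Icc
  set μL : Measure ℝ := volume.restrict S with hμLdef
  haveI : IsFiniteMeasure μL := ⟨by
    rw [hμLdef, Measure.restrict_apply_univ]; exact measure_Icc_lt_top⟩
  set μ : Measure (ℝ × ℝ) := τ.prod μL with hμdef
  have hmem : ∀ s ∈ S, t - s ∈ Set.Icc (0:ℝ) t := fun s hs =>
    ⟨by linarith [hs.2], by linarith [hs.1]⟩
  have hρ'ts : ∀ s ∈ S, ρ' (t - s) = ρ (t - s) := fun s hs => hρ'eq _ (hmem s hs)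
  -- the map and ν as pushforward
  set Φ : ℝ × ℝ → ℝ := fun p => p.1 * ρ' (t - p.2) with hΦdef
  have hΦc : Continuous Φ :=
    continuous_fst.mul (hρ'cont.comp (continuous_const.sub continuous_snd))
  have hΦm : Measurable Φ := hΦc.measurable
  have hνmap : ν = Measure.map Φ μ := by
    refine Measure.ext fun B hB => ?_
    rw [hν B hB, Measure.map_apply hΦm hB, hμdef, Measure.prod_apply (hΦm hB)]
    refine lintegral_congr fun y => ?_
    have hfm : Measurable fun s => y * ρ' (t - s) :=
      (measurable_const.mul (hρ'cont.comp (continuous_const.sub continuous_id)).measurable)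
    have hpre : MeasurableSet ((fun s => y * ρ' (t - s)) ⁻¹' B) := hfm hB
    have hset : Prod.mk y ⁻¹' (Φ ⁻¹' B) = (fun s => y * ρ' (t - s)) ⁻¹' B := rfl
    rw [hset, ← lintegral_indicator_one hpre]
    refine setLIntegral_congr_fun hSm (fun s hs => ?_)
    rw [← hρ'ts s hs]
    by_cases h : y * ρ' (t - s) ∈ B <;>
      simp [Set.indicator, h, Set.mem_preimage]
  -- measurability ingredients
  have hρ'ts_m : Measurable fun s : ℝ => ρ' (t - s) :=
    (hρ'cont.comp (continuous_const.sub continuous_id)).measurable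
  have hker_z : Measurable fun x : ℝ => kern z x :=
    measurable_kern' measurable_const measurable_id
  -- the four pieces
  obtain ⟨a, hadef⟩ : ∃ f : ℝ → ℂ,
      f = fun s => (-(1/2 : ℂ) * (G : ℂ) * (z : ℂ)^2) * ((ρ' (t - s)^2 : ℝ) : ℂ) := ⟨_, rfl⟩
  obtain ⟨b, hbdef⟩ : ∃ f : ℝ → ℂ,
      f = fun s => (Complex.I * (β : ℂ) * (z : ℂ)) * ((ρ' (t - s) : ℝ) : ℂ) := ⟨_, rfl⟩
  obtain ⟨J, hJdef⟩ : ∃ f : ℝ → ℂ,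
      f = fun s => ∫ y, kern (z * ρ' (t - s)) y ∂τ := ⟨_, rfl⟩
  obtain ⟨c, hcdef⟩ : ∃ f : ℝ × ℝ → ℝ,
      f = fun p => p.1 * ρ' (t - p.2) * (indD (p.1 * ρ' (t - p.2)) - indD p.1) := ⟨_, rfl⟩
  obtain ⟨j1, hj1def⟩ : ∃ f : ℝ → ℂ,
      f = fun s => ∫ y, kern z (y * ρ' (t - s)) ∂τ := ⟨_, rfl⟩
  obtain ⟨j2, hj2def⟩ : ∃ f : ℝ → ℂ,
      f = fun s => Complex.I * (z : ℂ) * (((∫ y, c (y, s) ∂τ) : ℝ) : ℂ) := ⟨_, rfl⟩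
  have hcm : Measurable c := by
    rw [hcdef]
    exact hΦm.mul ((measurable_indD.comp hΦm).sub (measurable_indD.comp measurable_fst))
  have hcb : ∀ p : ℝ × ℝ, |c p| ≤ 1 + C := by
    intro p
    have h1 : |Φ p * indD (Φ p)| ≤ 1 := abs_mul_indD_le _
    have h2 : |p.1 * indD p.1 * ρ' (t - p.2)| ≤ 1 * C := by
      rw [abs_mul]
      exact mul_le_mul (abs_mul_indD_le _) (hC' _) (abs_nonneg _) zero_le_one
    have hring : c p = Φ p * indD (Φ p) - p.1 * indD p.1 * ρ' (t - p.2) := by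
      simp only [hcdef, hΦdef]; ring
    rw [hring]
    calc |Φ p * indD (Φ p) - p.1 * indD p.1 * ρ' (t - p.2)|
        ≤ |Φ p * indD (Φ p)| + |p.1 * indD p.1 * ρ' (t - p.2)| := abs_sub _ _
      _ ≤ 1 + 1 * C := add_le_add h1 h2
      _ = 1 + C := by ring
  -- pointwise splitting of the kernel
  have hsplit : ∀ s y : ℝ,
      kern (z * ρ' (t - s)) y = kern z (y * ρ' (t - s)) +
        Complex.I * (z : ℂ) * ((c (y, s) : ℝ) : ℂ) := by
    intro s y
    have harg : Complex.I * ((z * ρ' (t - s) : ℝ) : ℂ) * (y : ℂ)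
        = Complex.I * (z : ℂ) * ((y * ρ' (t - s) : ℝ) : ℂ) := by push_cast; ring
    simp only [kern, hcdef, harg]
    push_cast
    ring
  -- pointwise splitting of the Lévy exponent
  have hlev : ∀ s : ℝ, levyExponent G β τ (z * ρ' (t - s)) = a s + b s + J s := by
    intro s
    simp only [levyExponent, hadef, hbdef, hJdef, kern]
    have : -(1/2 : ℂ) * (G : ℂ) * ((z * ρ' (t - s) : ℝ) : ℂ)^2 +
        Complex.I * (β : ℂ) * ((z * ρ' (t - s) : ℝ) : ℂ)
        = (-(1/2 : ℂ) * (G : ℂ) * (z : ℂ)^2) * ((ρ' (t - s)^2 : ℝ) : ℂ) +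
          (Complex.I * (β : ℂ) * (z : ℂ)) * ((ρ' (t - s) : ℝ) : ℂ) := by push_cast; ring
    rw [this]
  -- τ-integrabilities
  have hint1 : ∀ s : ℝ, Integrable (fun y => kern z (y * ρ' (t - s))) τ :=
    fun s => integrable_of_bound
      ((measurable_kern' measurable_const (measurable_id.mul_const _)).aestronglyMeasurable)
      (2 + |z|) (fun y => norm_kern_le _ _)
  have hint2 : ∀ s : ℝ, Integrable (fun y => Complex.I * (z : ℂ) * ((c (y, s) : ℝ) : ℂ)) τ := by
    intro s
    refine integrable_of_bound ?_ (|z| * (1 + C)) ?_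
    · exact (measurable_const.mul (Complex.measurable_ofReal.comp
        (hcm.comp (measurable_id.prodMk measurable_const)))).aestronglyMeasurable
    · intro y
      rw [norm_mul, norm_mul, Complex.norm_I, one_mul, Complex.norm_real, Real.norm_eq_abs,
        Complex.norm_real, Real.norm_eq_abs]
      exact mul_le_mul_of_nonneg_left (hcb _) (abs_nonneg z)
  -- splitting of J
  have hJsplit : ∀ s : ℝ, J s = j1 s + j2 s := by
    intro s
    simp only [hJdef, hj1def, hj2def]
    calc (∫ y, kern (z * ρ' (t - s)) y ∂τ)
        = ∫ y, (kern z (y * ρ' (t - s)) + Complex.I * (z : ℂ) * ((c (y, s) : ℝ) : ℂ)) ∂τ :=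
          integral_congr_ae (Filter.Eventually.of_forall fun y => hsplit s y)
      _ = (∫ y, kern z (y * ρ' (t - s)) ∂τ) +
          ∫ y, Complex.I * (z : ℂ) * ((c (y, s) : ℝ) : ℂ) ∂τ :=
          integral_add (hint1 s) (hint2 s)
      _ = (∫ y, kern z (y * ρ' (t - s)) ∂τ) +
          Complex.I * (z : ℂ) * (((∫ y, c (y, s) ∂τ) : ℝ) : ℂ) := by
          rw [integral_const_mul, integral_complex_ofReal']
  -- μL-integrabilities
  have ha_int : Integrable a μL := by
    rw [hadef]
    have : Continuous fun s : ℝ =>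
        (-(1/2 : ℂ) * (G : ℂ) * (z : ℂ)^2) * ((ρ' (t - s)^2 : ℝ) : ℂ) := continuous_const.mul (Complex.continuous_ofReal.comp
      ((hρ'cont.comp (continuous_const.sub continuous_id)).pow 2))
    exact this.integrableOn_Icc
  have hb_int : Integrable b μL := by
    rw [hbdef]
    have : Continuous fun s : ℝ =>
        (Complex.I * (β : ℂ) * (z : ℂ)) * ((ρ' (t - s) : ℝ) : ℂ) := continuous_const.mul (Complex.continuous_ofReal.comp
      (hρ'cont.comp (continuous_const.sub continuous_id)))
    exact this.integrableOn_Icc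
  have hj1m : StronglyMeasurable j1 := by
    have hm : Measurable fun p : ℝ × ℝ => kern z (p.2 * ρ' (t - p.1)) :=
      measurable_kern' measurable_const (measurable_snd.mul (hρ'ts_m.comp measurable_fst))
    rw [hj1def]
    exact hm.stronglyMeasurable.integral_prod_right'
  have hj1_int : Integrable j1 μL := by
    refine integrable_of_bound hj1m.aestronglyMeasurable ((2 + |z|) * (τ Set.univ).toReal) ?_
    intro s
    simp only [hj1def]
    exact norm_integral_le_of_norm_le_const
      (Filter.Eventually.of_forall fun y => norm_kern_le _ _)
  have hcint_m : StronglyMeasurable fun s : ℝ => ∫ y, c (y, s) ∂τ := by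
    have hm : Measurable fun p : ℝ × ℝ => c (p.2, p.1) :=
      hcm.comp (measurable_snd.prodMk measurable_fst)
    exact hm.stronglyMeasurable.integral_prod_right'
  have hj2sm : StronglyMeasurable j2 := by
    rw [hj2def]
    exact (Complex.continuous_ofReal.comp_stronglyMeasurable hcint_m).const_mul
      (Complex.I * (z : ℂ))
  have hj2_int : Integrable j2 μL := by
    refine integrable_of_bound ?_ (|z| * ((1 + C) * (τ Set.univ).toReal)) ?_
    · exact hj2sm.aestronglyMeasurable
    · intro s
      simp only [hj2def]
      rw [norm_mul, norm_mul, Complex.norm_I, one_mul, Complex.norm_real, Real.norm_eq_abs,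
        Complex.norm_real]
      refine mul_le_mul_of_nonneg_left ?_ (abs_nonneg z)
      exact norm_integral_le_of_norm_le_const
        (Filter.Eventually.of_forall fun y => by
          simpa [Real.norm_eq_abs] using hcb (y, s))
  have hJ_int : Integrable J μL := by
    have : J = fun s => j1 s + j2 s := funext hJsplit
    rw [this]; exact hj1_int.add hj2_int
  -- conversion from interval integrals to μL-integrals
  have hconv : ∀ f f' : ℝ → ℝ, (∀ s ∈ S, f s = f' s) →
      (∫ s in (0:ℝ)..t, f s) = ∫ s, f' s ∂μL := by
    intro f f' hff
    rw [hμLdef, hSdef, intervalIntegral.integral_of_le ht0, ← integral_Icc_eq_integral_Ioc]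
    exact setIntegral_congr_fun measurableSet_Icc fun s hs => hff s hs
  have hconvC : ∀ f f' : ℝ → ℂ, (∀ s ∈ S, f s = f' s) →
      (∫ s in (0:ℝ)..t, f s) = ∫ s, f' s ∂μL := by
    intro f f' hff
    rw [hμLdef, hSdef, intervalIntegral.integral_of_le ht0, ← integral_Icc_eq_integral_Ioc]
    exact setIntegral_congr_fun measurableSet_Icc fun s hs => hff s hs
  have hA' : (∫ s in (0:ℝ)..t, ρ (t - s)^2) = ∫ s, ρ' (t - s)^2 ∂μL :=
    hconv _ _ fun s hs => by rw [hρ'ts s hs]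
  have hB' : (∫ s in (0:ℝ)..t, ρ (t - s)) = ∫ s, ρ' (t - s) ∂μL :=
    hconv _ _ fun s hs => by rw [hρ'ts s hs]
  have hc' : ∀ y : ℝ, (∫ s in (0:ℝ)..t, y * ρ (t - s) * (indD (y * ρ (t - s)) - indD y))
      = ∫ s, c (y, s) ∂μL :=
    fun y => hconv _ _ fun s hs => by simp only [hcdef]; rw [hρ'ts s hs]
  have hlev' : (∫ s in (0:ℝ)..t, levyExponent G β τ (z * ρ (t - s)))
      = ∫ s, levyExponent G β τ (z * ρ' (t - s)) ∂μL :=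
    hconvC _ _ fun s hs => by rw [hρ'ts s hs]
  -- evaluate the Gaussian and drift parts
  have hEa : ∫ s, a s ∂μL = (-(1/2 : ℂ) * (G : ℂ) * (z : ℂ)^2) *
      (((∫ s, ρ' (t - s)^2 ∂μL) : ℝ) : ℂ) := by
    simp only [hadef]
    rw [integral_const_mul, integral_complex_ofReal']
  have hEb : ∫ s, b s ∂μL = (Complex.I * (β : ℂ) * (z : ℂ)) *
      (((∫ s, ρ' (t - s) ∂μL) : ℝ) : ℂ) := by
    simp only [hbdef]
    rw [integral_const_mul, integral_complex_ofReal']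
  -- Fubini for j1
  have hswap1 : Integrable (Function.uncurry fun s y : ℝ => kern z (y * ρ' (t - s)))
      (μL.prod τ) :=
    integrable_of_bound (measurable_kern' (measurable_const (a := z))
      (measurable_snd.mul (hρ'ts_m.comp measurable_fst))).aestronglyMeasurable
      (2 + |z|) (fun p => norm_kern_le _ _)
  have hprod1 : Integrable (fun p : ℝ × ℝ => kern z (Φ p)) μ :=
    integrable_of_bound (measurable_kern' measurable_const hΦm).aestronglyMeasurable
      (2 + |z|) (fun p => norm_kern_le _ _)
  have hEj1 : ∫ s, j1 s ∂μL = ∫ x, kern z x ∂ν := by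
    have step1 : ∫ s, j1 s ∂μL = ∫ y, (∫ s, kern z (y * ρ' (t - s)) ∂μL) ∂τ := by
      simp only [hj1def]
      exact integral_integral_swap hswap1
    have step2 : ∫ p, kern z (Φ p) ∂μ = ∫ y, (∫ s, kern z (y * ρ' (t - s)) ∂μL) ∂τ := by
      rw [hμdef]
      exact integral_prod _ hprod1
    have step3 : ∫ x, kern z x ∂ν = ∫ p, kern z (Φ p) ∂μ := by
      rw [hνmap]
      exact integral_map hΦm.aemeasurable hker_z.aestronglyMeasurable
    rw [step1, ← step2, ← step3]
  -- Fubini for j2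
  have hswap2 : Integrable (Function.uncurry fun s y : ℝ => c (y, s)) (μL.prod τ) :=
    integrable_of_bound (hcm.comp (measurable_snd.prodMk
      measurable_fst)).aestronglyMeasurable (1 + C)
      (fun p => by simpa [Real.norm_eq_abs, Function.uncurry] using hcb (p.2, p.1))
  have hEj2 : ∫ s, j2 s ∂μL = Complex.I * (z : ℂ) *
      (((∫ y, (∫ s in (0:ℝ)..t, y * ρ (t - s) * (indD (y * ρ (t - s)) - indD y)) ∂τ) : ℝ) : ℂ) := by
    simp only [hj2def]
    rw [integral_const_mul, integral_complex_ofReal']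
    congr 2
    rw [integral_integral_swap hswap2]
    exact integral_congr_ae (Filter.Eventually.of_forall fun y => (hc' y).symm)
  -- assemble
  have hsum : ∫ s, levyExponent G β τ (z * ρ' (t - s)) ∂μL
      = ∫ s, a s ∂μL + ∫ s, b s ∂μL + (∫ s, j1 s ∂μL + ∫ s, j2 s ∂μL) := by
    have hpt : ∀ s : ℝ, levyExponent G β τ (z * ρ' (t - s)) = a s + b s + (j1 s + j2 s) :=
      fun s => by rw [hlev s, hJsplit s]
    calc ∫ s, levyExponent G β τ (z * ρ' (t - s)) ∂μL
        = ∫ s, (a s + b s + (j1 s + j2 s)) ∂μL :=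
          integral_congr_ae (Filter.Eventually.of_forall hpt)
      _ = ∫ s, (a s + b s) ∂μL + ∫ s, (j1 s + j2 s) ∂μL :=
          integral_add (ha_int.add hb_int) (hj1_int.add hj2_int)
      _ = ∫ s, a s ∂μL + ∫ s, b s ∂μL + (∫ s, j1 s ∂μL + ∫ s, j2 s ∂μL) := by
          rw [integral_add ha_int hb_int, integral_add hj1_int hj2_int]
  rw [hlev', hsum, hEa, hEb, hEj1, hEj2, hA, hγ, ← hA', ← hB']
  have hkern_goal : (∫ x, (Complex.exp (Complex.I * (z : ℂ) * (x : ℂ)) - 1 -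
      Complex.I * (z : ℂ) * (x : ℂ) * (indD x : ℂ)) ∂ν) = ∫ x, kern z x ∂ν := by
    simp only [kern]
  rw [hkern_goal]
  push_cast
  ring
end

section
/- Let t > 0, let τ be a finite Borel measure on ℝ with τ({0}) = 0, let ρ : [0,t] → ℝ be continuous with ρ(s) ≠ 0 for all s ∈ [0,t], let D = {x ∈ ℝ : |x| ≤ 1}, and define ν_t on Borel sets B by ν_t(B) = ∫_ℝ ( ∫₀ᵗ 1_B(y·ρ(t−s)) ds ) τ(dy). Then for every z ∈ ℝ, ∫₀ᵗ ∫_ℝ (e^{iz·ρ(t−s)·y} − 1) τ(dy) ds = ∫_ℝ (e^{izx} − 1 − izx·1_D(x)) ν_t(dx) + i·∫₀ᵗ ∫_ℝ z·y·ρ(t−s)·1_D(y·ρ(t−s)) τ(dy) ds. -/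
open MeasureTheory ENNReal

lemma abs_indD_le (x : ℝ) : |indD x| ≤ 1 := by
  unfold indD
  by_cases h : x ∈ {y : ℝ | |y| ≤ 1} <;> simp [Set.indicator_apply, h]

lemma iter_eq_prod {E : Type*} [NormedAddCommGroup E] [NormedSpace ℝ E] [CompleteSpace E]
    (τ σ : Measure ℝ) [SFinite τ] [SFinite σ] (f : ℝ × ℝ → E)
    (hf : Integrable f (τ.prod σ)) :
    ∫ s, ∫ y, f (y, s) ∂τ ∂σ = ∫ p, f p ∂(τ.prod σ) := by
  have h1 := MeasureTheory.integral_integral_swap (f := fun y s => f (y, s))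
    (μ := τ) (ν := σ) (by exact hf)
  rw [← h1]
  exact (MeasureTheory.integral_prod f hf).symm

/-- Key intermediate identity (equation (3.9)) in the proof of Theorem 3.2:
`∫₀ᵗ∫(e^{izρ(t−s)y} − 1) τ(dy) ds
  = ∫(e^{izx} − 1 − izx·1_D(x)) ν_t(dx) + i∫₀ᵗ∫ zyρ(t−s)·1_D(yρ(t−s)) τ(dy) ds`. -/
theorem stmt_9 (t : ℝ) (ht : 0 < t)
    (τ : Measure ℝ) [IsFiniteMeasure τ] (hτ0 : τ {0} = 0)
    (ρ : ℝ → ℝ) (hρc : ContinuousOn ρ (Set.Icc 0 t))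
    (hρne : ∀ s ∈ Set.Icc (0:ℝ) t, ρ s ≠ 0)
    (ν : Measure ℝ)
    (hν : ∀ B : Set ℝ, MeasurableSet B →
      ν B = ∫⁻ y, (∫⁻ s in Set.Icc (0:ℝ) t,
        B.indicator (fun _ => (1 : ℝ≥0∞)) (y * ρ (t - s))) ∂τ) :
    ∀ z : ℝ,
      (∫ s in (0:ℝ)..t,
        ∫ y, (Complex.exp (Complex.I * (z : ℂ) * (ρ (t - s) : ℂ) * (y : ℂ)) - 1) ∂τ) =
      (∫ x, (Complex.exp (Complex.I * (z : ℂ) * (x : ℂ)) - 1 -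
          Complex.I * (z : ℂ) * (x : ℂ) * (indD x : ℂ)) ∂ν) +
        Complex.I * ((∫ s in (0:ℝ)..t,
          ∫ y, z * y * ρ (t - s) * indD (y * ρ (t - s)) ∂τ : ℝ) : ℂ) := by
  intro z
  -- globally continuous extension of ρ
  set ρ' : ℝ → ℝ := Set.IccExtend ht.le ((Set.Icc (0:ℝ) t).restrict ρ) with hρ'def
  have hρ'c : Continuous ρ' := Continuous.Icc_extend' (hρc.restrict)
  have hρ'eq : ∀ x ∈ Set.Icc (0:ℝ) t, ρ' x = ρ x := fun x hx =>
    Set.IccExtend_of_mem ht.le _ hx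
  set F : ℝ × ℝ → ℝ := fun p => p.1 * ρ' (t - p.2) with hFdef
  have hF : Measurable F :=
    measurable_fst.mul (hρ'c.measurable.comp (measurable_const.sub measurable_snd))
  set μ : Measure (ℝ × ℝ) := τ.prod (volume.restrict (Set.Icc (0:ℝ) t)) with hμdef
  have hνeq : ν = μ.map F := by
    ext B hB
    rw [Measure.map_apply hF hB, hν B hB, hμdef, Measure.prod_apply (hF hB)]
    refine lintegral_congr fun y => ?_
    have hsub : ∀ s ∈ Set.Icc (0:ℝ) t, t - s ∈ Set.Icc (0:ℝ) t := by
      intro s hs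
      exact ⟨by linarith [hs.2], by linarith [hs.1]⟩
    have h1 : ∫⁻ s in Set.Icc (0:ℝ) t,
        B.indicator (fun _ => (1:ℝ≥0∞)) (y * ρ (t - s)) =
        ∫⁻ s in Set.Icc (0:ℝ) t,
        ((fun s => y * ρ' (t - s)) ⁻¹' B).indicator (fun _ => (1:ℝ≥0∞)) s := by
      refine setLIntegral_congr_fun measurableSet_Icc (fun s hs => ?_)
      rw [← hρ'eq _ (hsub s hs)]
      exact (Set.indicator_comp_right _).symm
    have hSmeas : MeasurableSet ((fun s => y * ρ' (t - s)) ⁻¹' B) :=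
      (measurable_const.mul (hρ'c.measurable.comp
        (measurable_const.sub measurable_id))) hB
    rw [h1, lintegral_indicator hSmeas, setLIntegral_one]
    rfl
  have hsub : ∀ s ∈ Set.Icc (0:ℝ) t, t - s ∈ Set.Icc (0:ℝ) t := by
    intro s hs
    exact ⟨by linarith [hs.2], by linarith [hs.1]⟩
  have hfinres : IsFiniteMeasure (volume.restrict (Set.Icc (0:ℝ) t)) :=
    ⟨by rw [Measure.restrict_apply_univ]; exact measure_Icc_lt_top⟩
  have hμfin : IsFiniteMeasure μ := by rw [hμdef]; infer_instance
  -- the three integrands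
  set G : ℝ → ℂ := fun x => Complex.exp (Complex.I * z * x) - 1 -
      Complex.I * z * x * (indD x : ℂ) with hGdef
  set E : ℝ × ℝ → ℂ := fun p =>
      Complex.exp (Complex.I * z * (ρ' (t - p.2) : ℂ) * (p.1 : ℂ)) - 1 with hEdef
  set R : ℝ × ℝ → ℝ := fun p =>
      z * p.1 * ρ' (t - p.2) * indD (p.1 * ρ' (t - p.2)) with hRdef
  have hGmeas : Measurable G := by
    apply Measurable.sub
    apply Measurable.sub
    · exact Complex.measurable_exp.comp (measurable_const.mul Complex.measurable_ofReal)
    · exact measurable_const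
    · exact (measurable_const.mul Complex.measurable_ofReal).mul
        (Complex.measurable_ofReal.comp measurable_indD)
  have hEmeas : Measurable E := by
    apply Measurable.sub _ measurable_const
    exact Complex.measurable_exp.comp
      (((measurable_const.mul (Complex.measurable_ofReal.comp
        (hρ'c.measurable.comp (measurable_const.sub measurable_snd)))).mul
        (Complex.measurable_ofReal.comp measurable_fst)))
  have hRmeas : Measurable R := by
    exact ((measurable_const.mul measurable_fst).mul
      (hρ'c.measurable.comp (measurable_const.sub measurable_snd))).mul
      (measurable_indD.comp hF)
  -- norm of exp of purely imaginary
  have hexp1 : ∀ w : ℂ, w.re = 0 → ‖Complex.exp w‖ = 1 := by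
    intro w hw
    rw [Complex.norm_exp, hw, Real.exp_zero]
  have hGbd : ∀ x : ℝ, ‖G x‖ ≤ 2 + |z| := by
    intro x
    have h1 : ‖Complex.exp (Complex.I * z * x)‖ = 1 := hexp1 _ (by simp)
    have h2 : ‖Complex.I * z * x * (indD x : ℂ)‖ ≤ |z| := by
      have heq : Complex.I * z * x * (indD x : ℂ)
          = Complex.I * ((z : ℂ)) * (((x * indD x : ℝ)) : ℂ) := by push_cast; ring
      rw [heq]
      simp only [norm_mul, Complex.norm_I, one_mul, Complex.norm_real, Real.norm_eq_abs]
      refine mul_le_of_le_one_right (abs_nonneg z) ?_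
      rw [← abs_mul]
      exact abs_mul_indD_le x
    calc ‖G x‖ ≤ ‖Complex.exp (Complex.I * z * x) - 1‖ +
          ‖Complex.I * z * x * (indD x : ℂ)‖ := norm_sub_le _ _
      _ ≤ (‖Complex.exp (Complex.I * z * x)‖ + ‖(1:ℂ)‖) + |z| := by
          gcongr; exact norm_sub_le _ _
      _ ≤ 2 + |z| := by rw [h1]; norm_num
  have hEbd : ∀ p : ℝ × ℝ, ‖E p‖ ≤ 2 := by
    intro p
    have h1 : ‖Complex.exp (Complex.I * z * (ρ' (t - p.2) : ℂ) * (p.1 : ℂ))‖ = 1 := by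
      apply hexp1
      have : Complex.I * z * (ρ' (t - p.2) : ℂ) * (p.1 : ℂ)
          = ((z * ρ' (t - p.2) * p.1 : ℝ) : ℂ) * Complex.I := by push_cast; ring
      rw [this]; simp
    calc ‖E p‖ ≤ ‖Complex.exp (Complex.I * z * (ρ' (t - p.2) : ℂ) * (p.1 : ℂ))‖ + ‖(1:ℂ)‖ :=
        norm_sub_le _ _
      _ ≤ 2 := by rw [h1]; norm_num
  have hRbd : ∀ p : ℝ × ℝ, ‖R p‖ ≤ |z| := by
    intro p
    have heq : R p = z * (p.1 * ρ' (t - p.2) * indD (p.1 * ρ' (t - p.2))) := by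
      rw [hRdef]; ring
    rw [Real.norm_eq_abs, heq, abs_mul]
    exact mul_le_of_le_one_right (abs_nonneg z) (abs_mul_indD_le _)
  -- integrability
  have hEint : Integrable E μ :=
    (integrable_const (2:ℝ)).mono' hEmeas.aestronglyMeasurable (ae_of_all _ hEbd)
  have hRint : Integrable R μ :=
    (integrable_const |z|).mono' hRmeas.aestronglyMeasurable (ae_of_all _ hRbd)
  have hGFint : Integrable (fun p => G (F p)) μ :=
    (integrable_const (2 + |z|)).mono' (hGmeas.comp hF).aestronglyMeasurable
      (ae_of_all _ fun p => hGbd (F p))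
  have hIRint : Integrable (fun p => Complex.I * (R p : ℂ)) μ := by
    refine (integrable_const |z|).mono'
      (measurable_const.mul (Complex.measurable_ofReal.comp hRmeas)).aestronglyMeasurable
      (ae_of_all _ fun p => ?_)
    simp only [norm_mul, Complex.norm_I, one_mul, Complex.norm_real]
    exact hRbd p
  -- pointwise identity
  have hpt : ∀ p : ℝ × ℝ, E p = G (F p) + Complex.I * (R p : ℂ) := by
    intro p
    have harg : Complex.I * z * (ρ' (t - p.2) : ℂ) * (p.1 : ℂ)
        = Complex.I * z * ((F p : ℝ) : ℂ) := by
      simp only [hFdef]; push_cast; ring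
    simp only [hEdef, hGdef, hRdef, harg, hFdef]
    push_cast
    ring
  -- left-hand side as a product integral
  have hL : (∫ s in (0:ℝ)..t,
        ∫ y, (Complex.exp (Complex.I * (z : ℂ) * (ρ (t - s) : ℂ) * (y : ℂ)) - 1) ∂τ)
      = ∫ p, E p ∂μ := by
    rw [intervalIntegral.integral_of_le ht.le, ← MeasureTheory.integral_Icc_eq_integral_Ioc,
      hμdef, ← iter_eq_prod _ _ E (hμdef ▸ hEint)]
    refine setIntegral_congr_fun measurableSet_Icc fun s hs => ?_
    refine integral_congr_ae (ae_of_all _ fun y => ?_)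
    simp only [hEdef]
    rw [hρ'eq _ (hsub s hs)]
  have hRL : (∫ s in (0:ℝ)..t,
        ∫ y, z * y * ρ (t - s) * indD (y * ρ (t - s)) ∂τ)
      = ∫ p, R p ∂μ := by
    rw [intervalIntegral.integral_of_le ht.le, ← MeasureTheory.integral_Icc_eq_integral_Ioc,
      hμdef, ← iter_eq_prod _ _ R (hμdef ▸ hRint)]
    refine setIntegral_congr_fun measurableSet_Icc fun s hs => ?_
    refine integral_congr_ae (ae_of_all _ fun y => ?_)
    simp only [hRdef]
    rw [hρ'eq _ (hsub s hs)]
  have hGL : (∫ x, G x ∂ν) = ∫ p, G (F p) ∂μ := by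
    rw [hνeq]
    exact integral_map hF.aemeasurable hGmeas.aestronglyMeasurable
  rw [hL, hRL]
  calc ∫ p, E p ∂μ = ∫ p, (G (F p) + Complex.I * (R p : ℂ)) ∂μ :=
      integral_congr_ae (ae_of_all _ hpt)
    _ = (∫ p, G (F p) ∂μ) + ∫ p, Complex.I * (R p : ℂ) ∂μ := integral_add hGFint hIRint
    _ = (∫ x, G x ∂ν) + Complex.I * ((∫ p, R p ∂μ : ℝ) : ℂ) := by
        rw [hGL]
        congr 1
        have h1 : (fun p => Complex.I * (R p : ℂ)) = fun p => Complex.I • ((R p : ℂ)) := rfl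
        have hcoe : ∫ a, ((R a : ℝ) : ℂ) ∂μ = ((∫ a, R a ∂μ : ℝ) : ℂ) :=
          Complex.ofRealCLM.integral_comp_comm hRint
        rw [h1, integral_smul, hcoe, smul_eq_mul]
end
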